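/- Let A be a countable alphabet, P a probability distribution on A, and D a proper and almost surely complete dictionary over A. Let β be any finite string over A such that no string of D of length strictly less than |β| is a prefix of β. Then -∑_{α ∈ (D,β)} P(α) log₂ P(α) ≥ -P(β) log₂ P(β), where (D,β) = {α ∈ D : β is a prefix of α} and the sum is taken in [0,∞]. -/

import Mathlib

open scoped ENNReal
open Filter

/-- The probability of a finite string, obtained by extending the
distribution `P` multiplicatively: `P(a₁⋯aₙ) = ∏ᵢ P(aᵢ)`. -/
noncomputable def strProb {A : Type*} (P : PMF A) (l : List A) : ℝ≥0∞ :=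
  (l.map fun a => P a).prod

/-- A dictionary is a set of nonempty finite strings. -/
def IsDictionary {A : Type*} (D : Set (List A)) : Prop :=
  ∀ α ∈ D, α ≠ []

/-- A dictionary is proper if no string in it is a (proper) prefix of
another string in it. -/
def IsProper {A : Type*} (D : Set (List A)) : Prop :=
  ∀ α ∈ D, ∀ β ∈ D, α <+: β → α = β

/-- A dictionary is complete if every infinite sequence over `A` has a
prefix in it. -/
def IsCompleteDict {A : Type*} (D : Set (List A)) : Prop :=
  ∀ x : ℕ → A, ∃ α ∈ D, α = (List.range α.length).map x

/-- The probability that the length-`n` prefix of a random infinite sequence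
has some prefix belonging to `D`. -/
noncomputable def prefixProb {A : Type*} (P : PMF A) (D : Set (List A)) (n : ℕ) : ℝ≥0∞ :=
  ∑' γ : {γ : List A // γ.length = n ∧ ∃ β ∈ D, β <+: γ}, strProb P γ

/-- `D` is almost surely complete: under the infinite product measure `P^ℕ`,
the event that an infinite sequence has a prefix in `D` has probability `1`.
(By continuity from below, this probability is the limit, as `n → ∞`, of the
probability that the length-`n` prefix has a prefix in `D`.) -/
def IsASC {A : Type*} (P : PMF A) (D : Set (List A)) : Prop :=
  Tendsto (prefixProb P D) atTop (nhds 1)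

/-- `Tset D n` = strings of length `n` having no prefix in `D`. -/
def Tset {A : Type*} (D : Set (List A)) (n : ℕ) : Set (List A) :=
  {α | α.length = n ∧ ∀ β ∈ D, ¬ β <+: α}

/-- `Dperp D n = {α ∈ D : |α| = n} ∪ Tₙ`. -/
def Dperp {A : Type*} (D : Set (List A)) (n : ℕ) : Set (List A) :=
  {α ∈ D | α.length = n} ∪ Tset D n

/-- `Dn D n = {α ∈ D : |α| < n} ∪ Dₙ^⊥`. -/
def Dn {A : Type*} (D : Set (List A)) (n : ℕ) : Set (List A) :=
  {α ∈ D | α.length < n} ∪ Dperp D n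

/-- The one-letter extensions `αA = {αa : a ∈ A}` of a string `α`. -/
def oneExt {A : Type*} (α : List A) : Set (List A) :=
  {l | ∃ a : A, l = α ++ [a]}

/-- The extension `D[α] = (D \ {α}) ∪ αA` of a dictionary at `α`. -/
def extendDict {A : Type*} (D : Set (List A)) (α : List A) : Set (List A) :=
  (D \ {α}) ∪ oneExt α

/-- The nonnegative entropy contribution `-p log₂ p ∈ [0,∞]` of a
probability value `p`. -/
noncomputable def entTerm (p : ℝ≥0∞) : ℝ≥0∞ :=
  ENNReal.ofReal (-(p.toReal * Real.logb 2 p.toReal))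

/-- The entropy `H(E) = -∑_{α∈E} P(α) log₂ P(α)` of a dictionary, in `[0,∞]`. -/
noncomputable def dictEntropy {A : Type*} (P : PMF A) (E : Set (List A)) : ℝ≥0∞ :=
  ∑' α : E, entTerm (strProb P α)

/-- The average length `l̄(E) = ∑_{α∈E} P(α)|α|` of a dictionary, in `[0,∞]`. -/
noncomputable def avgLen {A : Type*} (P : PMF A) (E : Set (List A)) : ℝ≥0∞ :=
  ∑' α : E, strProb P α * (α : List A).length

/-- The source entropy `H(P) = -∑_{a∈A} P(a) log₂ P(a)`, in `[0,∞]`. -/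
noncomputable def srcEntropy {A : Type*} (P : PMF A) : ℝ≥0∞ :=
  ∑' a : A, entTerm (P a)


section Aux

variable {A : Type*} (P : PMF A)

lemma strProb_nil : strProb P [] = 1 := rfl

lemma strProb_cons (a : A) (l : List A) : strProb P (a :: l) = P a * strProb P l := by
  simp [strProb]

lemma strProb_append (l m : List A) : strProb P (l ++ m) = strProb P l * strProb P m := by
  simp [strProb]

lemma strProb_le_one (l : List A) : strProb P l ≤ 1 := by
  induction l with
  | nil => simp [strProb_nil]
  | cons a l ih =>
    rw [strProb_cons]
    calc P a * strProb P l ≤ 1 * 1 := mul_le_mul' (P.coe_le_one a) ih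
    _ = 1 := one_mul 1

lemma strProb_le_of_prefix {l m : List A} (h : l <+: m) : strProb P m ≤ strProb P l := by
  obtain ⟨t, rfl⟩ := h
  rw [strProb_append]
  calc strProb P l * strProb P t ≤ strProb P l * 1 :=
        mul_le_mul_right (strProb_le_one P t) _
  _ = strProb P l := mul_one _

lemma tsum_mono_set {β : Type*} (f : β → ℝ≥0∞) {s t : Set β} (h : s ⊆ t) :
    ∑' x : s, f x ≤ ∑' x : t, f x :=
  Summable.tsum_le_tsum_of_inj (Set.inclusion h) (Set.inclusion_injective h)
    (fun _ _ => zero_le) (fun _ => le_rfl) ENNReal.summable ENNReal.summable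

lemma tsum_len (n : ℕ) : ∑' γ : {γ : List A // γ.length = n}, strProb P γ = 1 := by
  induction n with
  | zero =>
    have hu : Unique {γ : List A // γ.length = 0} :=
      ⟨⟨⟨[], rfl⟩⟩, by rintro ⟨γ, hγ⟩; simp only [List.length_eq_zero_iff] at hγ; simp [hγ]⟩
    rw [tsum_eq_single (⟨[], rfl⟩ : {γ : List A // γ.length = 0})]
    · rfl
    · intro b hb; exact absurd (hu.uniq b ▸ (hu.uniq _).symm ▸ rfl) hb
  | succ n ih =>
    have hf : Function.Bijective (fun p : A × {γ : List A // γ.length = n} =>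
        (⟨p.1 :: p.2.1, by simp [p.2.2]⟩ : {γ : List A // γ.length = n + 1})) := by
      constructor
      · rintro ⟨a, γ, hγ⟩ ⟨b, δ, hδ⟩ h
        simp only [Subtype.mk.injEq, List.cons.injEq] at h
        obtain ⟨rfl, rfl⟩ := h; rfl
      · rintro ⟨γ, hγ⟩
        cases γ with
        | nil => simp at hγ
        | cons a γ => exact ⟨⟨a, γ, by simpa using hγ⟩, rfl⟩
    rw [← (Equiv.ofBijective _ hf).tsum_eq (fun γ : {γ : List A // γ.length = n + 1} =>
      strProb P (γ : List A))]
    have : ∀ p : A × {γ : List A // γ.length = n},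
        strProb P ((Equiv.ofBijective _ hf) p : List A) = P p.1 * strProb P p.2 := by
      rintro ⟨a, γ, hγ⟩
      show strProb P (a :: γ) = _
      exact strProb_cons P a γ
    rw [tsum_congr this,
      ENNReal.tsum_prod (f := fun a (γ : {γ : List A // γ.length = n}) => P a * strProb P γ)]
    simp_rw [ENNReal.tsum_mul_left, ih, mul_one]
    exact P.tsum_coe

lemma tsum_len_prefix (β : List A) {n : ℕ} (h : β.length ≤ n) :
    ∑' γ : {γ : List A // γ.length = n ∧ β <+: γ}, strProb P γ = strProb P β := by
  have hf : Function.Bijective (fun δ : {δ : List A // δ.length = n - β.length} =>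
      (⟨β ++ δ.1, by
        constructor
        · simp [δ.2]; omega
        · exact ⟨δ.1, rfl⟩⟩ : {γ : List A // γ.length = n ∧ β <+: γ})) := by
    constructor
    · rintro ⟨δ, hδ⟩ ⟨δ', hδ'⟩ hh
      simp only [Subtype.mk.injEq, List.append_cancel_left_eq] at hh
      simp [hh]
    · rintro ⟨γ, hlen, t, rfl⟩
      refine ⟨⟨t, ?_⟩, rfl⟩
      simp at hlen; omega
  rw [← (Equiv.ofBijective _ hf).tsum_eq (fun γ : {γ : List A // γ.length = n ∧ β <+: γ} =>
    strProb P (γ : List A))]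
  have : ∀ δ : {δ : List A // δ.length = n - β.length},
      strProb P ((Equiv.ofBijective _ hf) δ : List A) = strProb P β * strProb P δ := by
    rintro ⟨δ, hδ⟩
    show strProb P (β ++ δ) = _
    exact strProb_append P β δ
  rw [tsum_congr this, ENNReal.tsum_mul_left, tsum_len P (n - β.length), mul_one]

/-- The total mass of extensions of `β` in `D` dominates `strProb P β`. -/
lemma strProb_le_tsum_prefixSet {A : Type*} (P : PMF A) (D : Set (List A))
    (hprop : IsProper D) (hasc : IsASC P D) (β : List A)
    (hβ : ∀ γ ∈ D, γ.length < β.length → ¬ γ <+: β) :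
    strProb P β ≤ ∑' α : {α ∈ D | β <+: α}, strProb P (α : List A) := by
  set Q := ∑' α : {α ∈ D | β <+: α}, strProb P (α : List A) with hQ
  -- Step 1: for every n ≥ |β|, the mass of length-n strings extending β and
  -- having a prefix in D is at most Q.
  have key1 : ∀ n, β.length ≤ n →
      (∑' γ : {γ : List A // γ.length = n ∧ β <+: γ ∧ ∃ δ ∈ D, δ <+: γ},
        strProb P (γ : List A)) ≤ Q := by
    intro n hn
    -- the map from the sigma type to Sn
    have hf : Function.Bijective
        (fun p : Σ δ : {α ∈ D | β <+: α}, {γ : List A // γ.length = n ∧ (δ : List A) <+: γ} =>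
          (⟨p.2.1, p.2.2.1, (p.1.2.2.trans p.2.2.2), ⟨p.1.1, p.1.2.1, p.2.2.2⟩⟩ :
            {γ : List A // γ.length = n ∧ β <+: γ ∧ ∃ δ ∈ D, δ <+: γ})) := by
      constructor
      · rintro ⟨⟨δ₁, hδ₁D, hδ₁β⟩, γ₁, hγ₁⟩ ⟨⟨δ₂, hδ₂D, hδ₂β⟩, γ₂, hγ₂⟩ h
        simp only [Subtype.mk.injEq] at h
        have hδeq : δ₁ = δ₂ := by
          rcases le_total δ₁.length δ₂.length with hle | hle
          · exact hprop δ₁ hδ₁D δ₂ hδ₂D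
              (List.prefix_of_prefix_length_le hγ₁.2 (h ▸ hγ₂.2) hle)
          · exact (hprop δ₂ hδ₂D δ₁ hδ₁D
              (List.prefix_of_prefix_length_le (h ▸ hγ₂.2) hγ₁.2 hle)).symm
        subst hδeq
        have hγeq : γ₁ = γ₂ := h
        subst hγeq
        rfl
      · rintro ⟨γ, hlen, hpre, δ, hδD, hδγ⟩
        have hδβ : β <+: δ := by
          rcases le_total δ.length β.length with hle | hle
          · have hδβ' : δ <+: β := List.prefix_of_prefix_length_le hδγ hpre hle
            rcases lt_or_eq_of_le hle with hlt | heq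
            · exact absurd hδβ' (hβ δ hδD hlt)
            · have hde : δ = β := hδβ'.eq_of_length heq
              rw [hde]
          · exact List.prefix_of_prefix_length_le hpre hδγ hle
        exact ⟨⟨⟨δ, hδD, hδβ⟩, ⟨γ, hlen, hδγ⟩⟩, rfl⟩
    rw [← (Equiv.ofBijective _ hf).tsum_eq
      (fun γ : {γ : List A // γ.length = n ∧ β <+: γ ∧ ∃ δ ∈ D, δ <+: γ} =>
        strProb P (γ : List A))]
    have heval : ∀ p : Σ δ : {α ∈ D | β <+: α},
        {γ : List A // γ.length = n ∧ (δ : List A) <+: γ},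
        strProb P (((Equiv.ofBijective _ hf) p : {γ : List A //
          γ.length = n ∧ β <+: γ ∧ ∃ δ ∈ D, δ <+: γ}) : List A)
          = strProb P (p.2 : List A) := by
      rintro ⟨δ, γ⟩; rfl
    rw [tsum_congr heval, ENNReal.tsum_sigma
      (fun (δ : {α ∈ D | β <+: α}) (γ : {γ : List A // γ.length = n ∧ (δ : List A) <+: γ}) =>
        strProb P (γ : List A))]
    apply ENNReal.tsum_le_tsum
    intro δ
    by_cases hlen : (δ : List A).length ≤ n
    · exact le_of_eq (tsum_len_prefix P (δ : List A) hlen)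
    · have : IsEmpty {γ : List A // γ.length = n ∧ (δ : List A) <+: γ} := by
        constructor
        rintro ⟨γ, hγl, hγp⟩
        exact hlen (hγl ▸ hγp.length_le)
      rw [tsum_empty]
      exact zero_le
  -- Step 2: for every n ≥ |β|, strProb P β ≤ (that mass) + (1 - prefixProb P D n)
  have key2 : ∀ n, β.length ≤ n →
      strProb P β ≤ Q + (1 - prefixProb P D n) := by
    intro n hn
    set Sn : Set (List A) := {γ | γ.length = n ∧ β <+: γ ∧ ∃ δ ∈ D, δ <+: γ} with hSn
    set Bn : Set (List A) := {γ | γ.length = n ∧ β <+: γ ∧ ¬ ∃ δ ∈ D, δ <+: γ} with hBn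
    set Tn : Set (List A) := {γ | γ.length = n ∧ ¬ ∃ δ ∈ D, δ <+: γ} with hTn
    set Gn : Set (List A) := {γ | γ.length = n ∧ ∃ δ ∈ D, δ <+: γ} with hGn
    -- strProb β = μ(Sn) + μ(Bn)
    have hsplit : strProb P β
        = (∑' γ : Sn, strProb P (γ : List A)) + ∑' γ : Bn, strProb P (γ : List A) := by
      rw [← Summable.tsum_union_disjoint (f := strProb P) ?hd ENNReal.summable ENNReal.summable]
      · have hu : Sn ∪ Bn = {γ : List A | γ.length = n ∧ β <+: γ} := by
          ext γ
          simp only [hSn, hBn, Set.mem_union, Set.mem_setOf_eq]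
          constructor
          · rintro (⟨h1, h2, _⟩ | ⟨h1, h2, _⟩) <;> exact ⟨h1, h2⟩
          · rintro ⟨h1, h2⟩
            by_cases h3 : ∃ δ ∈ D, δ <+: γ
            · exact Or.inl ⟨h1, h2, h3⟩
            · exact Or.inr ⟨h1, h2, h3⟩
        rw [hu]
        exact (tsum_len_prefix P β hn).symm
      case hd =>
        rw [Set.disjoint_left]
        rintro γ ⟨_, _, hγ⟩ ⟨_, _, hγ'⟩
        exact hγ' hγ
    -- μ(Gn) + μ(Tn) = 1
    have htotal : prefixProb P D n + (∑' γ : Tn, strProb P (γ : List A)) = 1 := by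
      have : prefixProb P D n = ∑' γ : Gn, strProb P (γ : List A) := rfl
      rw [this, ← Summable.tsum_union_disjoint (f := strProb P) ?hd ENNReal.summable ENNReal.summable]
      · have hu : Gn ∪ Tn = {γ : List A | γ.length = n} := by
          ext γ
          simp only [hGn, hTn, Set.mem_union, Set.mem_setOf_eq]
          constructor
          · rintro (⟨h1, _⟩ | ⟨h1, _⟩) <;> exact h1
          · intro h1
            by_cases h3 : ∃ δ ∈ D, δ <+: γ
            · exact Or.inl ⟨h1, h3⟩
            · exact Or.inr ⟨h1, h3⟩
        rw [hu]
        exact tsum_len P n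
      case hd =>
        rw [Set.disjoint_left]
        rintro γ ⟨_, hγ⟩ ⟨_, hγ'⟩
        exact hγ' hγ
    have hT : (∑' γ : Tn, strProb P (γ : List A)) = 1 - prefixProb P D n := by
      have hne : prefixProb P D n ≠ ⊤ := by
        intro h
        rw [h] at htotal
        simp at htotal
      rw [← htotal, add_comm]
      rw [ENNReal.add_sub_cancel_right hne]
    calc strProb P β
        = (∑' γ : Sn, strProb P (γ : List A)) + ∑' γ : Bn, strProb P (γ : List A) := hsplit
      _ ≤ Q + (1 - prefixProb P D n) := by
          apply add_le_add
          · exact key1 n hn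
          · rw [← hT]
            apply tsum_mono_set
            rintro γ ⟨h1, _, h3⟩
            exact ⟨h1, h3⟩
  -- Step 3: take the limit
  have hlim : Tendsto (fun n => Q + (1 - prefixProb P D n)) atTop (nhds Q) := by
    have h1 : Tendsto (fun n => (1 : ℝ≥0∞) - prefixProb P D n) atTop (nhds 0) := by
      have := ENNReal.Tendsto.sub (tendsto_const_nhds (x := (1 : ℝ≥0∞))) hasc
        (Or.inl ENNReal.one_ne_top)
      simpa using this
    simpa using (tendsto_const_nhds (x := Q)).add h1
  refine ge_of_tendsto hlim ?_
  filter_upwards [eventually_ge_atTop β.length] with n hn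
  exact key2 n hn

end Aux

/-- If `D` is proper and almost surely complete and no string
of `D` of length `< |β|` is a prefix of `β`, then
`-∑_{α ∈ (D,β)} P(α) log₂ P(α) ≥ -P(β) log₂ P(β)`. -/
theorem entTerm_le_dictEntropy_prefixSet {A : Type*} [Countable A]
    (P : PMF A) (D : Set (List A)) (hdict : IsDictionary D)
    (hprop : IsProper D) (hasc : IsASC P D) (β : List A)
    (hβ : ∀ γ ∈ D, γ.length < β.length → ¬ γ <+: β) :
    entTerm (strProb P β) ≤ dictEntropy P {α ∈ D | β <+: α} := by
  set p := strProb P β with hp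
  have hp1 : p ≤ 1 := strProb_le_one P β
  have hpt : p ≠ ⊤ := ne_top_of_le_ne_top ENNReal.one_ne_top hp1
  have hptR : p.toReal ≤ 1 := by
    have := ENNReal.toReal_mono ENNReal.one_ne_top hp1
    simpa using this
  set c : ℝ := -(Real.logb 2 p.toReal) with hc
  have hc0 : 0 ≤ c := by
    rw [hc]
    exact neg_nonneg.mpr (Real.logb_nonpos one_lt_two ENNReal.toReal_nonneg hptR)
  have hPQ : p ≤ ∑' α : {α ∈ D | β <+: α}, strProb P (α : List A) :=
    strProb_le_tsum_prefixSet P D hprop hasc β hβ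
  have claim1 : ∀ α : {α ∈ D | β <+: α},
      strProb P (α : List A) * ENNReal.ofReal c ≤ entTerm (strProb P (α : List A)) := by
    rintro ⟨α, hαD, hαβ⟩
    set q := strProb P α with hq
    have hqp : q ≤ p := strProb_le_of_prefix P hαβ
    have hqt : q ≠ ⊤ := ne_top_of_le_ne_top hpt hqp
    have hqR : q.toReal ≤ p.toReal := ENNReal.toReal_mono hpt hqp
    have key : q.toReal * c ≤ -(q.toReal * Real.logb 2 q.toReal) := by
      rw [neg_mul_eq_mul_neg]
      rcases eq_or_lt_of_le (ENNReal.toReal_nonneg (a := q)) with h0 | h0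
      · rw [← h0]; simp
      · apply mul_le_mul_of_nonneg_left _ (le_of_lt h0)
        rw [hc, neg_le_neg_iff]
        exact (Real.logb_le_logb one_lt_two h0 (lt_of_lt_of_le h0 hqR)).mpr hqR
    calc q * ENNReal.ofReal c = ENNReal.ofReal q.toReal * ENNReal.ofReal c := by
          rw [ENNReal.ofReal_toReal hqt]
      _ = ENNReal.ofReal (q.toReal * c) := (ENNReal.ofReal_mul ENNReal.toReal_nonneg).symm
      _ ≤ ENNReal.ofReal (-(q.toReal * Real.logb 2 q.toReal)) := ENNReal.ofReal_le_ofReal key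
      _ = entTerm q := rfl
  calc entTerm p = ENNReal.ofReal (p.toReal * c) := by
        rw [entTerm, hc, neg_mul_eq_mul_neg]
    _ = ENNReal.ofReal p.toReal * ENNReal.ofReal c :=
        ENNReal.ofReal_mul ENNReal.toReal_nonneg
    _ = p * ENNReal.ofReal c := by rw [ENNReal.ofReal_toReal hpt]
    _ ≤ (∑' α : {α ∈ D | β <+: α}, strProb P (α : List A)) * ENNReal.ofReal c :=
        mul_le_mul_left hPQ _
    _ = ∑' α : {α ∈ D | β <+: α}, strProb P (α : List A) * ENNReal.ofReal c :=
        ENNReal.tsum_mul_right.symm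
    _ ≤ ∑' α : {α ∈ D | β <+: α}, entTerm (strProb P (α : List A)) :=
        ENNReal.tsum_le_tsum claim1
    _ = dictEntropy P {α ∈ D | β <+: α} := rfl
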